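/- For every v ∈ ℝ^d, every λ ∈ ℝ, and every smooth function f : ℝ^d → ℂ, the Vignéras operator intertwines with the raising operator: V_{λ+1}(𝒟(v) f) = 𝒟(v)(V_λ f). In particular, if V_λ f = 0 then V_{λ+1}(𝒟(v) f) = 0, so 𝒟(v) maps solutions of Vignéras' equation with parameter λ to solutions with parameter λ + 1. -/

import Mathlib

/-- Partial derivative in direction `i` of a function on `ℝ^d`. -/
noncomputable def pd {d : ℕ} (i : Fin d) (f : (Fin d → ℝ) → ℂ) : (Fin d → ℝ) → ℂ :=
  fun x => fderiv ℝ f x (Pi.single i 1)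

/-- Vignéras operator `V_λ f = ∑ (B⁻¹)_{ij} ∂_i∂_j f + 2π(∑ x_i ∂_i f − λ f)`. -/
noncomputable def Vop {d : ℕ} (B : Matrix (Fin d) (Fin d) ℝ) (lam : ℝ)
    (f : (Fin d → ℝ) → ℂ) : (Fin d → ℝ) → ℂ :=
  fun x =>
    (∑ i, ∑ j, ((B⁻¹ i j : ℝ) : ℂ) * pd i (pd j f) x)
      + 2 * (Real.pi : ℂ) * ((∑ i, (x i : ℂ) * pd i f x) - (lam : ℂ) * f x)

/-- Raising operator `𝒟(v) f = (v,x) f + (1/2π) ∑ v_i ∂_i f`, where `(v,x) = vᵀBx`. -/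
noncomputable def Dop {d : ℕ} (B : Matrix (Fin d) (Fin d) ℝ) (v : Fin d → ℝ)
    (f : (Fin d → ℝ) → ℂ) : (Fin d → ℝ) → ℂ :=
  fun x => ((∑ i, ∑ j, v i * B i j * x j : ℝ) : ℂ) * f x
    + (1 / (2 * (Real.pi : ℂ))) * ∑ i, (v i : ℂ) * pd i f x

namespace VigAux

variable {d : ℕ}

lemma smooth_diff {g : (Fin d → ℝ) → ℂ} (h : ContDiff ℝ (⊤:ℕ∞) g) : Differentiable ℝ g :=
  h.differentiable (by norm_cast)

lemma pd_smooth {f : (Fin d → ℝ) → ℂ} (hf : ContDiff ℝ (⊤:ℕ∞) f) (i : Fin d) :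
    ContDiff ℝ (⊤:ℕ∞) (pd i f) :=
  (hf.fderiv_right (m := (⊤:ℕ∞)) (by simp)).clm_apply contDiff_const

lemma pd_swap {f : (Fin d → ℝ) → ℂ} (hf : ContDiff ℝ (⊤:ℕ∞) f) (i j : Fin d)
    (x : Fin d → ℝ) : pd i (pd j f) x = pd j (pd i f) x := by
  have hsd : DifferentiableAt ℝ (fderiv ℝ f) x :=
    ((hf.fderiv_right (m := (⊤:ℕ∞)) (by simp)).differentiable (by simp)) x
  have h : ∀ a b : Fin d, pd a (pd b f) x
      = fderiv ℝ (fderiv ℝ f) x (Pi.single a 1) (Pi.single b 1) := by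
    intro a b
    show fderiv ℝ (fun y => (fderiv ℝ f y) ((fun _ => (Pi.single b 1 : Fin d → ℝ)) y)) x
        (Pi.single a 1) = _
    rw [fderiv_clm_apply hsd (differentiableAt_const _)]
    simp
  rw [h, h]
  exact (hf.contDiffAt.isSymmSndFDerivAt (by rw [minSmoothness_of_isRCLikeNormedField]; exact WithTop.coe_le_coe.mpr (le_top : (2:ℕ∞) ≤ ⊤))) _ _

lemma pd_congr {f g : (Fin d → ℝ) → ℂ} (h : ∀ y, f y = g y) (i : Fin d) (x : Fin d → ℝ) :
    pd i f x = pd i g x := by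
  have : f = g := funext h
  rw [this]

lemma pd_add {f g : (Fin d → ℝ) → ℂ} {x : Fin d → ℝ} (hf : DifferentiableAt ℝ f x)
    (hg : DifferentiableAt ℝ g x) (i : Fin d) :
    pd i (fun y => f y + g y) x = pd i f x + pd i g x := by
  unfold pd; rw [fderiv_fun_add hf hg]; simp

lemma pd_sub {f g : (Fin d → ℝ) → ℂ} {x : Fin d → ℝ} (hf : DifferentiableAt ℝ f x)
    (hg : DifferentiableAt ℝ g x) (i : Fin d) :
    pd i (fun y => f y - g y) x = pd i f x - pd i g x := by
  unfold pd; rw [fderiv_fun_sub hf hg]; simp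

lemma pd_const_mul {f : (Fin d → ℝ) → ℂ} {x : Fin d → ℝ} (hf : DifferentiableAt ℝ f x)
    (c : ℂ) (i : Fin d) :
    pd i (fun y => c * f y) x = c * pd i f x := by
  unfold pd; rw [fderiv_const_mul hf]; simp

lemma pd_mul {f g : (Fin d → ℝ) → ℂ} {x : Fin d → ℝ} (hg : DifferentiableAt ℝ g x)
    (hf : DifferentiableAt ℝ f x) (i : Fin d) :
    pd i (fun y => g y * f y) x = pd i g x * f x + g x * pd i f x := by
  unfold pd; rw [fderiv_fun_mul hg hf]; simp; ring

lemma pd_sum {ι : Type*} (s : Finset ι) {F : ι → (Fin d → ℝ) → ℂ} {x : Fin d → ℝ}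
    (hF : ∀ k ∈ s, DifferentiableAt ℝ (F k) x) (i : Fin d) :
    pd i (fun y => ∑ k ∈ s, F k y) x = ∑ k ∈ s, pd i (F k) x := by
  unfold pd; rw [fderiv_fun_sum hF]; simp

lemma coord_smooth (j : Fin d) : ContDiff ℝ (⊤:ℕ∞) (fun y : Fin d → ℝ => ((y j : ℝ) : ℂ)) :=
  Complex.ofRealCLM.contDiff.comp (ContinuousLinearMap.proj (R := ℝ)
    (φ := fun _ : Fin d => ℝ) j).contDiff

lemma pd_coord (j i : Fin d) (x : Fin d → ℝ) :
    pd i (fun y => ((y j : ℝ) : ℂ)) x = if j = i then 1 else 0 := by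
  have : (fun y : Fin d → ℝ => ((y j : ℝ) : ℂ))
      = (Complex.ofRealCLM.comp (ContinuousLinearMap.proj (R := ℝ)
        (φ := fun _ : Fin d => ℝ) j)) := rfl
  unfold pd
  rw [this, ContinuousLinearMap.fderiv]
  simp [Pi.single_apply, apply_ite Complex.ofReal]

lemma pd_linear (w : Fin d → ℝ) (i : Fin d) (x : Fin d → ℝ) :
    pd i (fun y => ∑ j, ((w j : ℝ):ℂ) * ((y j : ℝ):ℂ)) x = ((w i : ℝ):ℂ) := by
  rw [pd_sum Finset.univ
    (fun j _ => (smooth_diff (contDiff_const.mul (coord_smooth j))) x) i]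
  have h : ∀ j : Fin d, pd i (fun y => ((w j : ℝ):ℂ) * ((y j : ℝ):ℂ)) x
      = ((w j : ℝ):ℂ) * (if j = i then 1 else 0) := by
    intro j
    rw [pd_const_mul (smooth_diff (coord_smooth j) x) _ i, pd_coord]
  simp [h]

lemma sum_comm3 {M : Type*} [AddCommMonoid M] {n : ℕ} (g : Fin n → Fin n → Fin n → M) :
    ∑ i, ∑ j, ∑ k, g i j k = ∑ k, ∑ i, ∑ j, g i j k := by
  calc ∑ i, ∑ j, ∑ k, g i j k = ∑ i, ∑ k, ∑ j, g i j k :=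
        Finset.sum_congr rfl fun i _ => Finset.sum_comm
    _ = ∑ k, ∑ i, ∑ j, g i j k := Finset.sum_comm

end VigAux

open VigAux

/-- the Vignéras operator intertwines with the raising operator:
`V_{λ+1}(𝒟(v) f) = 𝒟(v)(V_λ f)`; in particular `𝒟(v)` maps solutions with parameter
`λ` to solutions with parameter `λ+1`. -/
theorem raising_intertwines_vigneras {d : ℕ} (hd : 1 ≤ d)
    (B : Matrix (Fin d) (Fin d) ℝ) (hsymm : B.IsSymm) (hinv : IsUnit B.det)
    (v : Fin d → ℝ) (lam : ℝ) (f : (Fin d → ℝ) → ℂ) (hf : ContDiff ℝ (⊤ : ℕ∞) f) :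
    (∀ x : Fin d → ℝ, Vop B (lam + 1) (Dop B v f) x = Dop B v (Vop B lam f) x) ∧
    ((∀ x : Fin d → ℝ, Vop B lam f x = 0) →
      ∀ x : Fin d → ℝ, Vop B (lam + 1) (Dop B v f) x = 0) := by
  -- abbreviations
  set q : ℂ := 1 / (2 * (Real.pi : ℂ)) with hq
  have hπ : (2 * (Real.pi : ℂ)) ≠ 0 := by
    simp [Real.pi_ne_zero, Complex.ofReal_ne_zero]
  -- smoothness
  have hs1 : ∀ i, ContDiff ℝ (⊤:ℕ∞) (pd i f) := fun i => pd_smooth hf i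
  have hs2 : ∀ i j, ContDiff ℝ (⊤:ℕ∞) (pd i (pd j f)) := fun i j => pd_smooth (hs1 j) i
  have hdf : Differentiable ℝ f := smooth_diff hf
  have hd1 : ∀ i, Differentiable ℝ (pd i f) := fun i => smooth_diff (hs1 i)
  have hd2 : ∀ i j, Differentiable ℝ (pd i (pd j f)) := fun i j => smooth_diff (hs2 i j)
  -- the linear form L and its coefficients
  set L : (Fin d → ℝ) → ℂ := fun y => ((∑ i, ∑ j, v i * B i j * y j : ℝ) : ℂ) with hLdef
  set c : Fin d → ℝ := fun a => ∑ k, v k * B k a with hcdef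
  have hLrw : ∀ y : Fin d → ℝ, L y = ∑ j, ((c j : ℝ):ℂ) * ((y j : ℝ):ℂ) := by
    intro y
    have h1 : (∑ i, ∑ j, v i * B i j * y j) = ∑ j, c j * y j := by
      rw [Finset.sum_comm]
      exact Finset.sum_congr rfl fun j _ => by
        rw [hcdef]; simp only [Finset.sum_mul]
    rw [hLdef]; simp only [h1]; push_cast; rfl
  have hLsmooth : ContDiff ℝ (⊤:ℕ∞) L := by
    have : L = fun y => ∑ j, ((c j : ℝ):ℂ) * ((y j : ℝ):ℂ) := funext hLrw
    rw [this]
    exact ContDiff.sum fun j _ => contDiff_const.mul (coord_smooth j)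
  have hLd : Differentiable ℝ L := smooth_diff hLsmooth
  have hLder : ∀ (x : Fin d → ℝ) (a : Fin d), pd a L x = ((c a : ℝ):ℂ) := by
    intro x a
    rw [pd_congr hLrw a x]
    exact pd_linear c a x
  -- matrix identities
  have hBB : B⁻¹ * B = 1 := Matrix.nonsing_inv_mul B hinv
  have hBB' : B * B⁻¹ = 1 := Matrix.mul_nonsing_inv B hinv
  have hM1 : ∀ i, (∑ j, B⁻¹ i j * c j) = v i := by
    intro i
    have h1 : ∀ j, B⁻¹ i j * c j = ∑ k, v k * (B⁻¹ i j * B j k) := by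
      intro j
      rw [hcdef]; simp only [Finset.mul_sum]
      exact Finset.sum_congr rfl fun k _ => by rw [hsymm.apply j k]; ring
    simp only [h1]
    rw [Finset.sum_comm]
    have h2 : ∀ k, (∑ j, v k * (B⁻¹ i j * B j k)) = v k * (B⁻¹ * B) i k := by
      intro k; rw [Matrix.mul_apply, Finset.mul_sum]
    simp only [h2, hBB, Matrix.one_apply]
    simp
  have hM2 : ∀ j, (∑ i, B⁻¹ i j * c i) = v j := by
    intro j
    have h1 : ∀ i, B⁻¹ i j * c i = ∑ k, v k * (B k i * B⁻¹ i j) := by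
      intro i
      rw [hcdef]; simp only [Finset.mul_sum]
      exact Finset.sum_congr rfl fun k _ => by ring
    simp only [h1]
    rw [Finset.sum_comm]
    have h2 : ∀ k, (∑ i, v k * (B k i * B⁻¹ i j)) = v k * (B * B⁻¹) k j := by
      intro k; rw [Matrix.mul_apply, Finset.mul_sum]
    simp only [h2, hBB', Matrix.one_apply]
    simp
  have hM3 : ∀ x : Fin d → ℝ, (∑ i, x i * c i) = ∑ i, ∑ j, v i * B i j * x j := by
    intro x
    simp only [hcdef, Finset.mul_sum]
    rw [Finset.sum_comm]
    exact Finset.sum_congr rfl fun i _ => Finset.sum_congr rfl fun j _ => by ring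
  have hM3c : ∀ x : Fin d → ℝ, (∑ i, ((x i : ℝ):ℂ) * ((c i : ℝ):ℂ)) = L x := by
    intro x
    calc (∑ i, ((x i : ℝ):ℂ) * ((c i : ℝ):ℂ)) = ((∑ i, x i * c i : ℝ) : ℂ) := by
          push_cast; rfl
      _ = ((∑ i, ∑ j, v i * B i j * x j : ℝ) : ℂ) := by rw [hM3 x]
      _ = L x := rfl
  -- derivative of Dop
  have hDopEq : ∀ y, Dop B v f y = L y * f y + q * ∑ k, ((v k:ℝ):ℂ) * pd k f y :=
    fun y => rfl
  have hRs : ContDiff ℝ (⊤:ℕ∞) (fun y => ∑ k, ((v k:ℝ):ℂ) * pd k f y) :=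
    ContDiff.sum fun k _ => contDiff_const.mul (hs1 k)
  have hRd : Differentiable ℝ (fun y => ∑ k, ((v k:ℝ):ℂ) * pd k f y) := smooth_diff hRs
  have hRder : ∀ (x : Fin d → ℝ) (a : Fin d),
      pd a (fun y => ∑ k, ((v k:ℝ):ℂ) * pd k f y) x
        = ∑ k, ((v k:ℝ):ℂ) * pd a (pd k f) x := by
    intro x a
    rw [pd_sum Finset.univ (fun k _ => (smooth_diff (contDiff_const.mul (hs1 k))) x) a]
    exact Finset.sum_congr rfl fun k _ => pd_const_mul (hd1 k x) _ a
  have h1 : ∀ (x : Fin d → ℝ) (a : Fin d), pd a (Dop B v f) x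
      = ((c a:ℝ):ℂ) * f x + L x * pd a f x + q * ∑ k, ((v k:ℝ):ℂ) * pd a (pd k f) x := by
    intro x a
    rw [pd_congr hDopEq a x]
    rw [pd_add (f := fun y => L y * f y) ((hLd x).mul (hdf x)) ((hRd x).const_mul q) a]
    rw [pd_mul (hLd x) (hdf x) a, hLder x a]
    rw [pd_const_mul (hRd x) q a, hRder x a]
  have h2 : ∀ (x : Fin d → ℝ) (a b : Fin d), pd b (pd a (Dop B v f)) x
      = ((c a:ℝ):ℂ) * pd b f x + ((c b:ℝ):ℂ) * pd a f x + L x * pd b (pd a f) x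
        + q * ∑ k, ((v k:ℝ):ℂ) * pd b (pd a (pd k f)) x := by
    intro x a b
    rw [pd_congr (fun y => h1 y a) b x]
    have hRd2 : Differentiable ℝ (fun y => ∑ k, ((v k:ℝ):ℂ) * pd a (pd k f) y) :=
      smooth_diff (ContDiff.sum fun k _ => contDiff_const.mul (pd_smooth (hs1 k) a))
    have hRder2 : pd b (fun y => ∑ k, ((v k:ℝ):ℂ) * pd a (pd k f) y) x
        = ∑ k, ((v k:ℝ):ℂ) * pd b (pd a (pd k f)) x := by
      rw [pd_sum Finset.univ
        (fun k _ => (smooth_diff (contDiff_const.mul (pd_smooth (hs1 k) a))) x) b]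
      exact Finset.sum_congr rfl fun k _ => pd_const_mul (hd2 a k x) _ b
    rw [pd_add (f := fun y => ((c a:ℝ):ℂ) * f y + L y * pd a f y) (((hdf x).const_mul _).add ((hLd x).mul (hd1 a x))) ((hRd2 x).const_mul q) b]
    rw [pd_add (g := fun y => L y * pd a f y) ((hdf x).const_mul _) ((hLd x).mul (hd1 a x)) b]
    rw [pd_const_mul (hdf x) _ b, pd_mul (hLd x) (hd1 a x) b, hLder x b]
    rw [pd_const_mul (hRd2 x) q b, hRder2]
    ring
  -- derivative of Vop
  have hVopEq : ∀ y, Vop B lam f y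
      = (∑ i, ∑ j, ((B⁻¹ i j:ℝ):ℂ) * pd i (pd j f) y)
        + 2 * (Real.pi:ℂ) * ((∑ i, ((y i:ℝ):ℂ) * pd i f y) - (lam:ℂ) * f y) :=
    fun y => rfl
  have hP1s : ContDiff ℝ (⊤:ℕ∞) (fun y => ∑ i, ∑ j, ((B⁻¹ i j:ℝ):ℂ) * pd i (pd j f) y) :=
    ContDiff.sum fun i _ => ContDiff.sum fun j _ => contDiff_const.mul (hs2 i j)
  have hSs : ContDiff ℝ (⊤:ℕ∞) (fun y => ∑ i, ((y i:ℝ):ℂ) * pd i f y) :=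
    ContDiff.sum fun i _ => (coord_smooth i).mul (hs1 i)
  have h3 : ∀ (x : Fin d → ℝ) (a : Fin d), pd a (Vop B lam f) x
      = (∑ i, ∑ j, ((B⁻¹ i j:ℝ):ℂ) * pd a (pd i (pd j f)) x)
        + 2 * (Real.pi:ℂ) * ((pd a f x + ∑ i, ((x i:ℝ):ℂ) * pd a (pd i f) x)
          - (lam:ℂ) * pd a f x) := by
    intro x a
    rw [pd_congr hVopEq a x]
    have hP2d : DifferentiableAt ℝ
        (fun y => 2 * (Real.pi:ℂ) * ((∑ i, ((y i:ℝ):ℂ) * pd i f y) - (lam:ℂ) * f y)) x :=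
      (((smooth_diff hSs x).sub ((hdf x).const_mul _)).const_mul _)
    rw [pd_add (smooth_diff hP1s x) hP2d a]
    have e1 : pd a (fun y => ∑ i, ∑ j, ((B⁻¹ i j:ℝ):ℂ) * pd i (pd j f) y) x
        = ∑ i, ∑ j, ((B⁻¹ i j:ℝ):ℂ) * pd a (pd i (pd j f)) x := by
      rw [pd_sum Finset.univ
        (fun i _ => smooth_diff (ContDiff.sum fun j _ => contDiff_const.mul (hs2 i j)) x) a]
      exact Finset.sum_congr rfl fun i _ => by
        rw [pd_sum Finset.univ (fun j _ => smooth_diff (contDiff_const.mul (hs2 i j)) x) a]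
        exact Finset.sum_congr rfl fun j _ => pd_const_mul (hd2 i j x) _ a
    have e2 : pd a (fun y => ∑ i, ((y i:ℝ):ℂ) * pd i f y) x
        = pd a f x + ∑ i, ((x i:ℝ):ℂ) * pd a (pd i f) x := by
      rw [pd_sum Finset.univ (fun i _ => (smooth_diff ((coord_smooth i).mul (hs1 i))) x) a]
      have h : ∀ i : Fin d, pd a (fun y => ((y i:ℝ):ℂ) * pd i f y) x
          = (if i = a then 1 else 0) * pd i f x + ((x i:ℝ):ℂ) * pd a (pd i f) x := by
        intro i
        rw [pd_mul (smooth_diff (coord_smooth i) x) (hd1 i x) a, pd_coord]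
      simp only [h]
      rw [Finset.sum_add_distrib]
      congr 1
      simp
    rw [e1]
    rw [pd_const_mul (f := fun y => (∑ i, ((y i:ℝ):ℂ) * pd i f y) - (lam:ℂ) * f y) ((smooth_diff hSs x).sub ((hdf x).const_mul _)) _ a]
    rw [pd_sub (smooth_diff hSs x) ((hdf x).const_mul _) a, e2, pd_const_mul (hdf x) _ a]
  -- main identity
  have main : ∀ x : Fin d → ℝ, Vop B (lam + 1) (Dop B v f) x = Dop B v (Vop B lam f) x := by
    intro x
    -- atoms
    set A : ℂ := ∑ i, ∑ j, ((B⁻¹ i j:ℝ):ℂ) * pd i (pd j f) x with hA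
    set S : ℂ := ∑ i, ((x i:ℝ):ℂ) * pd i f x with hS
    set R : ℂ := ∑ k, ((v k:ℝ):ℂ) * pd k f x with hR
    set T : ℂ := ∑ k, ((v k:ℝ):ℂ) * (∑ i, ∑ j, ((B⁻¹ i j:ℝ):ℂ) * pd k (pd i (pd j f)) x)
      with hT
    set W : ℂ := ∑ k, ((v k:ℝ):ℂ) * (∑ i, ((x i:ℝ):ℂ) * pd k (pd i f) x) with hW
    have hswap3 : ∀ i j k : Fin d, pd i (pd j (pd k f)) x = pd k (pd i (pd j f)) x := by
      intro i j k
      calc pd i (pd j (pd k f)) x = pd i (pd k (pd j f)) x :=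
            pd_congr (fun y => pd_swap hf j k y) i x
        _ = pd k (pd i (pd j f)) x := pd_swap (hs1 j) i k x
    -- sum identities
    have hS1 : ∑ i, ∑ j, ((B⁻¹ i j:ℝ):ℂ) * (((c j:ℝ):ℂ) * pd i f x) = R := by
      rw [hR]
      refine Finset.sum_congr rfl fun i _ => ?_
      have e : ∑ j, ((B⁻¹ i j:ℝ):ℂ) * (((c j:ℝ):ℂ) * pd i f x)
          = (∑ j, ((B⁻¹ i j * c j : ℝ):ℂ)) * pd i f x := by
        rw [Finset.sum_mul]
        exact Finset.sum_congr rfl fun j _ => by push_cast; ring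
      rw [e]
      have e2 : (∑ j, ((B⁻¹ i j * c j : ℝ):ℂ)) = ((v i:ℝ):ℂ) := by
        exact_mod_cast congrArg (Complex.ofReal) (hM1 i)
      rw [e2]
    have hS2 : ∑ i, ∑ j, ((B⁻¹ i j:ℝ):ℂ) * (((c i:ℝ):ℂ) * pd j f x) = R := by
      rw [hR, Finset.sum_comm]
      refine Finset.sum_congr rfl fun j _ => ?_
      have e : ∑ i, ((B⁻¹ i j:ℝ):ℂ) * (((c i:ℝ):ℂ) * pd j f x)
          = (∑ i, ((B⁻¹ i j * c i : ℝ):ℂ)) * pd j f x := by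
        rw [Finset.sum_mul]
        exact Finset.sum_congr rfl fun i _ => by push_cast; ring
      rw [e]
      have e2 : (∑ i, ((B⁻¹ i j * c i : ℝ):ℂ)) = ((v j:ℝ):ℂ) := by
        exact_mod_cast congrArg (Complex.ofReal) (hM2 j)
      rw [e2]
    have hS4 : ∑ i, ∑ j, ((B⁻¹ i j:ℝ):ℂ) * (L x * pd i (pd j f) x) = L x * A := by
      rw [hA, Finset.mul_sum]
      refine Finset.sum_congr rfl fun i _ => ?_
      rw [Finset.mul_sum]
      exact Finset.sum_congr rfl fun j _ => by ring
    have hS3 : ∑ i, ∑ j, ((B⁻¹ i j:ℝ):ℂ)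
        * (q * ∑ k, ((v k:ℝ):ℂ) * pd i (pd j (pd k f)) x) = q * T := by
      have step : ∀ i j : Fin d, ((B⁻¹ i j:ℝ):ℂ)
          * (q * ∑ k, ((v k:ℝ):ℂ) * pd i (pd j (pd k f)) x)
          = ∑ k, ((v k:ℝ):ℂ) * (q * (((B⁻¹ i j:ℝ):ℂ) * pd k (pd i (pd j f)) x)) := by
        intro i j
        simp only [Finset.mul_sum]
        exact Finset.sum_congr rfl fun k _ => by rw [hswap3 i j k]; ring
      simp only [step]
      rw [sum_comm3, hT, Finset.mul_sum]
      refine Finset.sum_congr rfl fun k _ => ?_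
      simp only [Finset.mul_sum]
      exact Finset.sum_congr rfl fun i _ => Finset.sum_congr rfl fun j _ => by ring
    have hS5 : ∑ i, ((x i:ℝ):ℂ) * (q * ∑ k, ((v k:ℝ):ℂ) * pd i (pd k f) x) = q * W := by
      have step : ∀ i : Fin d, ((x i:ℝ):ℂ) * (q * ∑ k, ((v k:ℝ):ℂ) * pd i (pd k f) x)
          = ∑ k, ((v k:ℝ):ℂ) * (q * (((x i:ℝ):ℂ) * pd k (pd i f) x)) := by
        intro i
        simp only [Finset.mul_sum]
        exact Finset.sum_congr rfl fun k _ => by rw [pd_swap hf i k x]; ring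
      simp only [step]
      rw [Finset.sum_comm, hW, Finset.mul_sum]
      refine Finset.sum_congr rfl fun k _ => ?_
      simp only [Finset.mul_sum]
      exact Finset.sum_congr rfl fun i _ => by ring
    have hcF : ∑ i, ((x i:ℝ):ℂ) * (((c i:ℝ):ℂ) * f x) = L x * f x := by
      rw [← hM3c x, Finset.sum_mul]
      exact Finset.sum_congr rfl fun i _ => by ring
    have hxL : ∑ i, ((x i:ℝ):ℂ) * (L x * pd i f x) = L x * S := by
      rw [hS, Finset.mul_sum]
      exact Finset.sum_congr rfl fun i _ => by ring
    -- left-hand side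
    have HL : Vop B (lam + 1) (Dop B v f) x
        = R + R + L x * A + q * T
          + 2 * (Real.pi:ℂ) * ((L x * f x + L x * S + q * W)
            - ((lam + 1 : ℝ):ℂ) * (L x * f x + q * R)) := by
      have unf : Vop B (lam + 1) (Dop B v f) x
          = (∑ i, ∑ j, ((B⁻¹ i j:ℝ):ℂ) * pd i (pd j (Dop B v f)) x)
            + 2 * (Real.pi:ℂ) * ((∑ i, ((x i:ℝ):ℂ) * pd i (Dop B v f) x)
              - ((lam + 1 : ℝ):ℂ) * Dop B v f x) := rfl
      rw [unf]
      have eA : ∑ i, ∑ j, ((B⁻¹ i j:ℝ):ℂ) * pd i (pd j (Dop B v f)) x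
          = R + R + L x * A + q * T := by
        have e : ∀ i j : Fin d, ((B⁻¹ i j:ℝ):ℂ) * pd i (pd j (Dop B v f)) x
            = ((B⁻¹ i j:ℝ):ℂ) * (((c j:ℝ):ℂ) * pd i f x)
              + ((B⁻¹ i j:ℝ):ℂ) * (((c i:ℝ):ℂ) * pd j f x)
              + ((B⁻¹ i j:ℝ):ℂ) * (L x * pd i (pd j f) x)
              + ((B⁻¹ i j:ℝ):ℂ) * (q * ∑ k, ((v k:ℝ):ℂ) * pd i (pd j (pd k f)) x) := by
          intro i j; rw [h2 x j i]; ring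
        simp only [e, Finset.sum_add_distrib]
        rw [hS1, hS2, hS4, hS3]
      have eB : ∑ i, ((x i:ℝ):ℂ) * pd i (Dop B v f) x
          = L x * f x + L x * S + q * W := by
        have e : ∀ i : Fin d, ((x i:ℝ):ℂ) * pd i (Dop B v f) x
            = ((x i:ℝ):ℂ) * (((c i:ℝ):ℂ) * f x)
              + ((x i:ℝ):ℂ) * (L x * pd i f x)
              + ((x i:ℝ):ℂ) * (q * ∑ k, ((v k:ℝ):ℂ) * pd i (pd k f) x) := by
          intro i; rw [h1 x i]; ring
        simp only [e, Finset.sum_add_distrib]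
        rw [hcF, hxL, hS5]
      have eC : Dop B v f x = L x * f x + q * R := rfl
      rw [eA, eB, eC]
    -- right-hand side
    have HR : Dop B v (Vop B lam f) x
        = L x * (A + 2 * (Real.pi:ℂ) * (S - (lam:ℂ) * f x))
          + q * (T + (2 * (Real.pi:ℂ) * R + 2 * (Real.pi:ℂ) * W
            - 2 * (Real.pi:ℂ) * (lam:ℂ) * R)) := by
      have unf : Dop B v (Vop B lam f) x
          = L x * Vop B lam f x + q * ∑ k, ((v k:ℝ):ℂ) * pd k (Vop B lam f) x := rfl
      rw [unf]
      have eV : Vop B lam f x = A + 2 * (Real.pi:ℂ) * (S - (lam:ℂ) * f x) := rfl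
      have eT : ∑ k, ((v k:ℝ):ℂ) * pd k (Vop B lam f) x
          = T + (2 * (Real.pi:ℂ) * R + 2 * (Real.pi:ℂ) * W
            - 2 * (Real.pi:ℂ) * (lam:ℂ) * R) := by
        have e : ∀ k : Fin d, ((v k:ℝ):ℂ) * pd k (Vop B lam f) x
            = ((v k:ℝ):ℂ) * (∑ i, ∑ j, ((B⁻¹ i j:ℝ):ℂ) * pd k (pd i (pd j f)) x)
              + 2 * (Real.pi:ℂ) * (((v k:ℝ):ℂ) * pd k f x)
              + 2 * (Real.pi:ℂ) * (((v k:ℝ):ℂ) * (∑ i, ((x i:ℝ):ℂ) * pd k (pd i f) x))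
              - 2 * (Real.pi:ℂ) * (lam:ℂ) * (((v k:ℝ):ℂ) * pd k f x) := by
          intro k; rw [h3 x k]; ring
        simp only [e]
        rw [Finset.sum_sub_distrib, Finset.sum_add_distrib, Finset.sum_add_distrib]
        rw [← Finset.mul_sum, ← Finset.mul_sum, ← Finset.mul_sum, ← hR, ← hW, ← hT]
        ring
      rw [eV, eT]
    rw [HL, HR, hq]
    push_cast
    field_simp
    ring
  refine ⟨main, fun h0 x => ?_⟩
  rw [main x]
  have hzero : Vop B lam f = fun _ => (0:ℂ) := funext h0
  rw [hzero]
  simp [Dop, pd, fderiv_fun_const]
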